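/- Let G be a disjoint union of directed paths and let S be any schedule of q jobs respecting the precedence constraints of G. Then there exists a schedule S' of the same q jobs (hence of the same cost) respecting the precedence constraints of G in which, for each path, all scheduled jobs from that path appear contiguously. -/

import Mathlib

/-- A job is a pair (path index, position on that path). -/
abbrev Job := ℕ × ℕ

/-- `IsSchedule z p L` : `L` is an injective sequence of valid jobs of the disjoint-paths
instance with `z` paths where path `i` has `p i` jobs, respecting the precedence
constraints: a non-initial job occurs only after its predecessor on its path. -/
def IsSchedule (z : ℕ) (p : ℕ → ℕ) (L : List Job) : Prop :=
  L.Nodup ∧ (∀ j ∈ L, j.1 < z ∧ j.2 < p j.1) ∧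
  ∀ i ℓ : ℕ, (i, ℓ + 1) ∈ L → (i, ℓ) ∈ L ∧ L.idxOf (i, ℓ) < L.idxOf (i, ℓ + 1)

lemma beq_inst_eq : (instBEqOfDecidableEq (α := Job)) = instBEqProd := by
  congr 1 with x y
  rw [Bool.eq_iff_iff]
  show decide (x = y) = true ↔ _
  simp [Prod.ext_iff]

lemma indexOf_append_of_mem' {x : Job} {l₁ l₂ : List Job} (h : x ∈ l₁) :
    (l₁ ++ l₂).idxOf x = l₁.idxOf x := by
  exact List.idxOf_append_of_mem h

lemma indexOf_append_of_not_mem' {x : Job} {l₁ l₂ : List Job} (h : x ∉ l₁) :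
    (l₁ ++ l₂).idxOf x = l₁.length + l₂.idxOf x := by
  exact List.idxOf_append_of_notMem h

lemma downclosed_mem_iff (t : Finset ℕ) (h : ∀ n, n + 1 ∈ t → n ∈ t) :
    ∀ m, m ∈ t ↔ m < t.card := by
  have h1 : ∀ m, m ∈ t → Finset.range (m + 1) ⊆ t := by
    intro m
    induction m with
    | zero => intro hm n hn; simp at hn; subst hn; exact hm
    | succ m ih =>
        intro hm n hn
        rcases Nat.lt_succ_iff_lt_or_eq.mp (Finset.mem_range.mp hn) with h' | h'
        · exact ih (h m hm) (Finset.mem_range.mpr h')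
        · subst h'; exact hm
  intro m
  constructor
  · intro hm
    have := Finset.card_le_card (h1 m hm)
    simpa using this
  · intro hm
    by_contra hmt
    have hsub : t ⊆ Finset.range m := by
      intro n hn
      rw [Finset.mem_range]
      by_contra hge
      exact hmt (h1 n hn (Finset.mem_range.mpr (by omega)))
    have := Finset.card_le_card hsub
    simp at this; omega

lemma idx_block (i : ℕ) : ∀ n b, b < n →
    ((List.range n).map (fun c => ((i, c) : Job))).idxOf (i, b) = b := by
  intro n
  induction n with
  | zero => intro b hb; omega
  | succ n ih =>
      intro b hb
      rw [List.range_succ, List.map_append]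
      rcases Nat.lt_succ_iff_lt_or_eq.mp hb with h' | h'
      · rw [indexOf_append_of_mem' (by simp [h'])]
        exact ih b h'
      · subst h'
        rw [indexOf_append_of_not_mem' (by simp)]
        simp [List.idxOf_cons]

/-- Any precedence-respecting schedule can be reordered into a precedence-respecting
schedule of the same jobs (hence of the same length and cost) in which, for each path,
all scheduled jobs from that path appear contiguously. -/
theorem schedule_reorder_contiguous (z : ℕ) (p : ℕ → ℕ) (L : List Job)
    (hL : IsSchedule z p L) :
    ∃ L' : List Job, IsSchedule z p L' ∧ L'.Perm L ∧
      ∀ i : ℕ, ∃ l₁ l₂ l₃ : List Job, L' = l₁ ++ l₂ ++ l₃ ∧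
        (∀ j ∈ l₂, j.1 = i) ∧ (∀ j ∈ l₁ ++ l₃, j.1 ≠ i) := by
  obtain ⟨hnd, hval, hprec⟩ := hL
  classical
  -- the set of positions on path i present in L
  set t : ℕ → Finset ℕ := fun i => (L.filter (fun j => j.1 = i)).toFinset.image Prod.snd with ht
  set k : ℕ → ℕ := fun i => (t i).card with hk
  have hmem_t : ∀ i b, b ∈ t i ↔ (i, b) ∈ L := by
    intro i b
    simp only [ht, Finset.mem_image, List.mem_toFinset, List.mem_filter]
    constructor
    · rintro ⟨⟨a, c⟩, ⟨hmem, hfst⟩, hsnd⟩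
      simp at hfst hsnd
      subst hfst; subst hsnd; exact hmem
    · intro h; exact ⟨(i, b), ⟨h, by simp⟩, rfl⟩
  have hdc : ∀ i, ∀ n, n + 1 ∈ t i → n ∈ t i := by
    intro i n h
    rw [hmem_t] at *
    exact (hprec i n h).1
  have hmemL : ∀ i b, (i, b) ∈ L ↔ b < k i := by
    intro i b
    rw [← hmem_t]
    exact downclosed_mem_iff (t i) (hdc i) b
  set f : ℕ → List Job := fun i => (List.range (k i)).map (fun c => ((i, c) : Job)) with hf
  set L' : List Job := (List.range z).flatMap f with hL'
  have hmemL' : ∀ j : Job, j ∈ L' ↔ j.1 < z ∧ j.2 < k j.1 := by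
    rintro ⟨a, b⟩
    simp only [hL', List.mem_flatMap, hf, List.mem_map, List.mem_range]
    constructor
    · rintro ⟨i, hi, c, hc, hj⟩
      obtain ⟨rfl, rfl⟩ := Prod.mk.injEq .. ▸ hj
      exact ⟨hi, hc⟩
    · rintro ⟨ha, hb⟩
      exact ⟨a, ha, b, hb, rfl⟩
  have hmem_iff : ∀ j : Job, j ∈ L' ↔ j ∈ L := by
    rintro ⟨a, b⟩
    rw [hmemL', hmemL]
    constructor
    · rintro ⟨_, hb⟩; exact hb
    · intro hb
      refine ⟨?_, hb⟩
      exact (hval (a, b) ((hmemL a b).mpr hb)).1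
  have hndL' : L'.Nodup := by
    rw [hL', List.nodup_flatMap]
    constructor
    · intro i _
      exact (List.nodup_range).map (fun x y h => (Prod.mk.injEq .. ▸ h).2)
    · refine List.Pairwise.imp ?_ (List.pairwise_lt_range (n := z))
      intro a b hab
      intro x hxa hxb
      simp only [hf, List.mem_map] at hxa hxb
      obtain ⟨c, _, rfl⟩ := hxa
      obtain ⟨d, _, h⟩ := hxb
      exact absurd (Prod.mk.injEq .. ▸ h).1 (by omega)
  -- decomposition of L' around block i, for i < z
  have hdecomp : ∀ i, i < z → L' = (List.range i).flatMap f ++ f i ++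
      (((List.range z).drop (i + 1)).flatMap f) := by
    intro i hi
    conv_lhs => rw [hL', ← List.take_append_drop (i + 1) (List.range z)]
    rw [List.take_range, min_eq_left (by omega), List.flatMap_append, List.range_succ,
      List.flatMap_append]
    simp [List.append_assoc]
  have hnotmem_pre : ∀ i b, (i, b) ∉ (List.range i).flatMap f := by
    intro i b h
    simp only [List.mem_flatMap, hf, List.mem_map, List.mem_range] at h
    obtain ⟨a, ha, c, _, h⟩ := h
    exact absurd (Prod.mk.injEq .. ▸ h).1 (by omega)
  have hidx : ∀ i b, i < z → b < k i →
      L'.idxOf (i, b) = ((List.range i).flatMap f).length + b := by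
    intro i b hi hb
    rw [hdecomp i hi, List.append_assoc, indexOf_append_of_not_mem' (hnotmem_pre i b),
      indexOf_append_of_mem' (by simp [hf, hb])]
    rw [hf]
    simp only []
    rw [idx_block i (k i) b hb]
  refine ⟨L', ⟨hndL', ?_, ?_⟩, ?_, ?_⟩
  · intro j hj
    exact hval j ((hmem_iff j).mp hj)
  · intro i ℓ h
    have h1 : (i, ℓ + 1) ∈ L := (hmem_iff _).mp h
    have hℓ1 : ℓ + 1 < k i := (hmemL i (ℓ + 1)).mp h1
    have hi : i < z := (hval _ h1).1
    have hℓ : ℓ < k i := by omega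
    refine ⟨(hmemL' (i, ℓ)).mpr ⟨hi, hℓ⟩, ?_⟩
    rw [hidx i ℓ hi hℓ, hidx i (ℓ + 1) hi hℓ1]
    omega
  · exact List.perm_of_nodup_nodup_toFinset_eq hndL' hnd
      (by ext j; simp only [List.mem_toFinset]; exact hmem_iff j)
  · intro i
    by_cases hi : i < z
    · refine ⟨(List.range i).flatMap f, f i, ((List.range z).drop (i + 1)).flatMap f,
        hdecomp i hi, ?_, ?_⟩
      · intro j hj
        simp only [hf, List.mem_map] at hj
        obtain ⟨c, _, rfl⟩ := hj
        rfl
      · intro j hj hji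
        rw [List.mem_append] at hj
        rcases hj with hj | hj <;>
          simp only [List.mem_flatMap, hf, List.mem_map, List.mem_range,
            List.mem_drop_iff_getElem] at hj
        · obtain ⟨a, ha, c, _, rfl⟩ := hj
          simp at hji; omega
        · obtain ⟨a, ha, c, _, rfl⟩ := hj
          obtain ⟨m, hm, hma⟩ := ha
          have : a = m + (i + 1) := by
            simp only [List.getElem_range] at hma
            omega
          simp at hji; omega
    · refine ⟨L', [], [], by simp, by simp, ?_⟩
      intro j hj hji
      simp only [List.append_nil] at hj
      have := (hval j ((hmem_iff j).mp hj)).1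
      omega
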